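/- Let d_x, d_y ≥ 1, set Z = ℝ^{d_x} × ℝ^{d_y}, and let l : Z → ℝ be continuous with |l(x,y)| ≤ M for all (x,y), Lipschitz in x with constant C uniformly in y, and Lipschitz in y with constant C uniformly in x. For η ∈ P(Z) write η_X and η_Y for its first and second marginals. Then for all η, θ ∈ P(Z), |NI(η_X, η_Y) − NI(θ_X, θ_Y)| ≤ 2(M + C) · d_BL(η, θ). -/

import Mathlib

open MeasureTheory NNReal

/-- The dual bounded-Lipschitz distance between two (probability) measures:
the supremum of `∫ f dμ - ∫ f dν` over bounded Lipschitz `f` with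
`‖f‖_∞ + Lip f ≤ 1`. -/
noncomputable def dBL {S : Type*} [MetricSpace S] [MeasurableSpace S]
    (μ ν : Measure S) : ℝ :=
  sSup {r : ℝ | ∃ f : S → ℝ, (∃ a b : ℝ, 0 ≤ a ∧ 0 ≤ b ∧ a + b ≤ 1 ∧
      (∀ x, |f x| ≤ a) ∧ LipschitzWith b.toNNReal f) ∧
    r = (∫ x, f x ∂μ) - ∫ x, f x ∂ν}

/-- The expected loss `L(μ, ν) = ∫∫ l(x,y) dμ(x) dν(y)`. -/
noncomputable def Lexp {dx dy : ℕ}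
    (l : EuclideanSpace ℝ (Fin dx) × EuclideanSpace ℝ (Fin dy) → ℝ)
    (μ : Measure (EuclideanSpace ℝ (Fin dx)))
    (ν : Measure (EuclideanSpace ℝ (Fin dy))) : ℝ :=
  ∫ y, (∫ x, l (x, y) ∂μ) ∂ν

/-- The Nikaidô–Isoda error
`NI(μ, ν) = sup_{ν'} L(μ, ν') - inf_{μ'} L(μ', ν)`, with the supremum and
infimum over Borel probability measures. -/
noncomputable def NIerr {dx dy : ℕ}
    (l : EuclideanSpace ℝ (Fin dx) × EuclideanSpace ℝ (Fin dy) → ℝ)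
    (μ : Measure (EuclideanSpace ℝ (Fin dx)))
    (ν : Measure (EuclideanSpace ℝ (Fin dy))) : ℝ :=
  (⨆ ν' : ProbabilityMeasure (EuclideanSpace ℝ (Fin dy)),
      Lexp l μ (ν' : Measure (EuclideanSpace ℝ (Fin dy)))) -
    ⨅ μ' : ProbabilityMeasure (EuclideanSpace ℝ (Fin dx)),
      Lexp l (μ' : Measure (EuclideanSpace ℝ (Fin dx))) ν

/-- The Nikaidô–Isoda error of the two marginals of a measure on the product
space `Z = ℝ^{dx} × ℝ^{dy}`. -/
noncomputable def NImarg {dx dy : ℕ}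
    (l : EuclideanSpace ℝ (Fin dx) × EuclideanSpace ℝ (Fin dy) → ℝ)
    (η : Measure (EuclideanSpace ℝ (Fin dx) × EuclideanSpace ℝ (Fin dy))) : ℝ :=
  NIerr l (η.map Prod.fst) (η.map Prod.snd)

lemma integrable_of_bound {S : Type*} [MeasurableSpace S] (μ : Measure S) [IsFiniteMeasure μ]
    {f : S → ℝ} (hm : AEStronglyMeasurable f μ) {M : ℝ} (hb : ∀ x, |f x| ≤ M) :
    Integrable f μ :=
  Integrable.mono' (integrable_const M) hm
    (Filter.Eventually.of_forall fun x => by simpa [Real.norm_eq_abs] using hb x)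

lemma abs_integral_le' {S : Type*} [MeasurableSpace S] (μ : Measure S) [IsProbabilityMeasure μ]
    {f : S → ℝ} {M : ℝ} (hb : ∀ x, |f x| ≤ M) : |∫ x, f x ∂μ| ≤ M := by
  have := norm_integral_le_of_norm_le_const (μ := μ) (f := f) (C := M)
    (Filter.Eventually.of_forall fun x => by simpa [Real.norm_eq_abs] using hb x)
  simpa [Real.norm_eq_abs, measure_univ] using this

lemma lipschitzWith_integral {α β : Type*} [PseudoMetricSpace α] [MeasurableSpace β]
    (μ : Measure β) [IsProbabilityMeasure μ] {f : α → β → ℝ} {C : ℝ≥0}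
    (hf : ∀ b, LipschitzWith C (fun a => f a b)) (hint : ∀ a, Integrable (f a) μ) :
    LipschitzWith C (fun a => ∫ b, f a b ∂μ) := by
  refine LipschitzWith.of_dist_le_mul fun a a' => ?_
  rw [Real.dist_eq, ← integral_sub (hint a) (hint a')]
  have h := norm_integral_le_of_norm_le_const (μ := μ) (f := fun b => f a b - f a' b)
    (C := C * dist a a') (Filter.Eventually.of_forall fun b => by
      have := (hf b).dist_le_mul a a'
      simpa [Real.dist_eq, Real.norm_eq_abs] using this)
  simpa [Real.norm_eq_abs, measure_univ] using h
lemma dBL_bddAbove {S : Type*} [MetricSpace S] [MeasurableSpace S]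
    (μ ν : Measure S) [IsProbabilityMeasure μ] [IsProbabilityMeasure ν] :
    BddAbove {r : ℝ | ∃ f : S → ℝ, (∃ a b : ℝ, 0 ≤ a ∧ 0 ≤ b ∧ a + b ≤ 1 ∧
      (∀ x, |f x| ≤ a) ∧ LipschitzWith b.toNNReal f) ∧
    r = (∫ x, f x ∂μ) - ∫ x, f x ∂ν} := by
  refine ⟨2, ?_⟩
  rintro r ⟨f, ⟨a, b, ha, hb0, hab, hfa, hfl⟩, rfl⟩
  have h1 := abs_integral_le' μ hfa
  have h2 := abs_integral_le' ν hfa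
  have ha1 : a ≤ 1 := by nlinarith
  calc (∫ x, f x ∂μ) - ∫ x, f x ∂ν ≤ |∫ x, f x ∂μ| + |∫ x, f x ∂ν| := by
        cases abs_le.mp (le_refl |∫ x, f x ∂μ|) <;> cases abs_le.mp (le_refl |∫ x, f x ∂ν|) <;> linarith [le_abs_self (∫ x, f x ∂μ), neg_abs_le (∫ x, f x ∂ν)]
    _ ≤ 2 := by linarith

lemma dBL_nonneg {S : Type*} [MetricSpace S] [MeasurableSpace S]
    (μ ν : Measure S) [IsProbabilityMeasure μ] [IsProbabilityMeasure ν] :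
    0 ≤ dBL μ ν := by
  refine le_csSup (dBL_bddAbove μ ν) ?_
  exact ⟨0, ⟨0, 0, le_refl _, le_refl _, by norm_num, fun x => by norm_num,
    by simpa using LipschitzWith.const (0 : ℝ)⟩, by simp⟩

lemma le_dBL {S : Type*} [MetricSpace S] [MeasurableSpace S]
    (μ ν : Measure S) [IsProbabilityMeasure μ] [IsProbabilityMeasure ν]
    {f : S → ℝ} {M : ℝ} {C : ℝ≥0} (hM : 0 ≤ M)
    (hb : ∀ x, |f x| ≤ M) (hl : LipschitzWith C f) :
    (∫ x, f x ∂μ) - ∫ x, f x ∂ν ≤ (M + C) * dBL μ ν := by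
  rcases eq_or_lt_of_le (by positivity : (0:ℝ) ≤ M + C) with h0 | hpos
  · have hM0 : M = 0 := by have := C.coe_nonneg; linarith
    have hf0 : ∀ x, f x = 0 := fun x => abs_nonpos_iff.mp (hM0 ▸ hb x)
    simp [funext hf0, ← h0]
  · set c : ℝ := M + C with hc
    have hmem : ((∫ x, f x ∂μ) - ∫ x, f x ∂ν) / c ∈
        {r : ℝ | ∃ g : S → ℝ, (∃ a b : ℝ, 0 ≤ a ∧ 0 ≤ b ∧ a + b ≤ 1 ∧
          (∀ x, |g x| ≤ a) ∧ LipschitzWith b.toNNReal g) ∧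
          r = (∫ x, g x ∂μ) - ∫ x, g x ∂ν} := by
      refine ⟨fun x => f x / c, ⟨M / c, C / c, by positivity, by positivity, ?_, ?_, ?_⟩, ?_⟩
      · rw [← add_div, div_le_one hpos]
      · intro x
        rw [abs_div, abs_of_pos hpos]
        exact div_le_div_of_nonneg_right (hb x) hpos.le
      · refine LipschitzWith.of_dist_le_mul fun x y => ?_
        have hd : dist (f x / c) (f y / c) = dist (f x) (f y) / c := by
          rw [Real.dist_eq, Real.dist_eq, ← _root_.sub_div, abs_div, abs_of_pos hpos]
        rw [hd, Real.coe_toNNReal _ (by positivity : (0:ℝ) ≤ (C:ℝ)/c)]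
        rw [div_mul_eq_mul_div, div_le_div_iff_of_pos_right hpos]  -- maybe wrong name
        exact hl.dist_le_mul x y
      · rw [integral_div, integral_div, _root_.sub_div]
    have := le_csSup (dBL_bddAbove μ ν) hmem
    rw [div_le_iff₀ hpos] at this
    calc (∫ x, f x ∂μ) - ∫ x, f x ∂ν ≤ dBL μ ν * c := this
      _ = c * dBL μ ν := mul_comm _ _
variable {dx dy : ℕ}

local notation "X" => EuclideanSpace ℝ (Fin dx)
local notation "Y" => EuclideanSpace ℝ (Fin dy)

lemma abs_Lexp_le (l : X × Y → ℝ) {M : ℝ}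
    (hb : ∀ x y, |l (x, y)| ≤ M) (hM : 0 ≤ M)
    (μ : Measure X) (ν : Measure Y) [IsProbabilityMeasure μ] [IsProbabilityMeasure ν] :
    |Lexp l μ ν| ≤ M :=
  abs_integral_le' ν fun y => abs_integral_le' μ fun x => hb x y

lemma Lexp_fst (l : X × Y → ℝ) {M : ℝ} (hc : Continuous l)
    (hb : ∀ x y, |l (x, y)| ≤ M)
    (η : Measure (X × Y)) [IsProbabilityMeasure η]
    (ν' : Measure Y) [IsProbabilityMeasure ν'] :
    Lexp l (η.map Prod.fst) ν' = ∫ z, (∫ y, l (z.1, y) ∂ν') ∂η := by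
  unfold Lexp
  have h1 : ∀ y : Y, (∫ x, l (x, y) ∂(η.map Prod.fst)) = ∫ z, l (z.1, y) ∂η := fun y =>
    integral_map measurable_fst.aemeasurable
      ((hc.comp (continuous_id.prodMk continuous_const)).aestronglyMeasurable)
  simp_rw [h1]
  refine integral_integral_swap ?_
  refine integrable_of_bound _ ?_ (M := M) ?_
  · exact (hc.comp ((continuous_fst.comp continuous_snd).prodMk continuous_fst)).aestronglyMeasurable
  · rintro ⟨y, z⟩; exact hb z.1 y

lemma Lexp_snd (l : X × Y → ℝ) {M : ℝ} (hc : Continuous l)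
    (hb : ∀ x y, |l (x, y)| ≤ M) {C : ℝ≥0} (hlyC : ∀ x, LipschitzWith C (fun y => l (x, y)))
    (η : Measure (X × Y)) [IsProbabilityMeasure η]
    (μ' : Measure X) [IsProbabilityMeasure μ'] :
    Lexp l μ' (η.map Prod.snd) = ∫ z, (∫ x, l (x, z.2) ∂μ') ∂η := by
  unfold Lexp
  refine integral_map measurable_snd.aemeasurable ?_
  have hlip : LipschitzWith C (fun y => ∫ x, l (x, y) ∂μ') := by
    refine lipschitzWith_integral μ' (f := fun y x => l (x, y)) (fun x => hlyC x) (fun y => ?_)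
    exact integrable_of_bound _ ((hc.comp (continuous_id.prodMk continuous_const)).aestronglyMeasurable) (fun x => hb x y)
  exact hlip.continuous.aestronglyMeasurable
lemma key_fst (l : X × Y → ℝ) {M : ℝ} {C : ℝ≥0} (hc : Continuous l)
    (hb : ∀ x y, |l (x, y)| ≤ M)
    (hlx : ∀ y, LipschitzWith C (fun x => l (x, y)))
    (η θ : Measure (X × Y)) [IsProbabilityMeasure η] [IsProbabilityMeasure θ]
    (ν' : Measure Y) [IsProbabilityMeasure ν'] :
    |Lexp l (η.map Prod.fst) ν' - Lexp l (θ.map Prod.fst) ν'| ≤ (M + C) * dBL η θ := by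
  have hM : 0 ≤ M := le_trans (abs_nonneg _) (hb 0 0)
  rw [Lexp_fst l hc hb η ν', Lexp_fst l hc hb θ ν']
  set g : X × Y → ℝ := fun z => ∫ y, l (z.1, y) ∂ν' with hg
  have hgb : ∀ z, |g z| ≤ M := fun z => abs_integral_le' ν' fun y => hb z.1 y
  have hglip : LipschitzWith C g := by
    refine lipschitzWith_integral ν' (f := fun (z : X × Y) y => l (z.1, y)) (fun y => ?_) (fun z => ?_)
    · have h := (hlx y).comp (LipschitzWith.prod_fst (α := X) (β := Y)); rw [mul_one] at h; exact h
    · exact integrable_of_bound _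
        ((hc.comp (continuous_const.prodMk continuous_id)).aestronglyMeasurable)
        (fun y => hb z.1 y)
  rw [abs_sub_le_iff]
  constructor
  · exact le_dBL η θ hM hgb hglip
  · have h := le_dBL η θ (f := fun z => -g z) hM
      (fun z => by rw [abs_neg]; exact hgb z) hglip.neg
    rw [integral_neg, integral_neg] at h
    linarith

lemma key_snd (l : X × Y → ℝ) {M : ℝ} {C : ℝ≥0} (hc : Continuous l)
    (hb : ∀ x y, |l (x, y)| ≤ M)
    (hly : ∀ x, LipschitzWith C (fun y => l (x, y)))
    (η θ : Measure (X × Y)) [IsProbabilityMeasure η] [IsProbabilityMeasure θ]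
    (μ' : Measure X) [IsProbabilityMeasure μ'] :
    |Lexp l μ' (η.map Prod.snd) - Lexp l μ' (θ.map Prod.snd)| ≤ (M + C) * dBL η θ := by
  have hM : 0 ≤ M := le_trans (abs_nonneg _) (hb 0 0)
  rw [Lexp_snd l hc hb hly η μ', Lexp_snd l hc hb hly θ μ']
  set g : X × Y → ℝ := fun z => ∫ x, l (x, z.2) ∂μ' with hg
  have hgb : ∀ z, |g z| ≤ M := fun z => abs_integral_le' μ' fun x => hb x z.2
  have hglip : LipschitzWith C g := by
    refine lipschitzWith_integral μ' (f := fun (z : X × Y) x => l (x, z.2)) (fun x => ?_) (fun z => ?_)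
    · have h := (hly x).comp (LipschitzWith.prod_snd (α := X) (β := Y)); rw [mul_one] at h; exact h
    · exact integrable_of_bound _
        ((hc.comp (continuous_id.prodMk continuous_const)).aestronglyMeasurable)
        (fun x => hb x z.2)
  rw [abs_sub_le_iff]
  constructor
  · exact le_dBL η θ hM hgb hglip
  · have h := le_dBL η θ (f := fun z => -g z) hM
      (fun z => by rw [abs_neg]; exact hgb z) hglip.neg
    rw [integral_neg, integral_neg] at h
    linarith
/-- The Nikaidô–Isoda error of the marginals is Lipschitz in the dual
bounded-Lipschitz distance on the product space. -/
theorem stmt14 {dx dy : ℕ} (hdx : 1 ≤ dx) (hdy : 1 ≤ dy)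
    (l : EuclideanSpace ℝ (Fin dx) × EuclideanSpace ℝ (Fin dy) → ℝ)
    (M : ℝ) (C : ℝ≥0) (hc : Continuous l)
    (hb : ∀ x y, |l (x, y)| ≤ M)
    (hlx : ∀ y, LipschitzWith C (fun x => l (x, y)))
    (hly : ∀ x, LipschitzWith C (fun y => l (x, y)))
    (η θ : Measure (EuclideanSpace ℝ (Fin dx) × EuclideanSpace ℝ (Fin dy)))
    [IsProbabilityMeasure η] [IsProbabilityMeasure θ] :
    |NImarg l η - NImarg l θ| ≤ 2 * (M + C) * dBL η θ := by
  have hM : 0 ≤ M := le_trans (abs_nonneg _) (hb 0 0)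
  haveI : Nonempty (ProbabilityMeasure (EuclideanSpace ℝ (Fin dy))) :=
    ⟨⟨Measure.dirac 0, inferInstance⟩⟩
  haveI : Nonempty (ProbabilityMeasure (EuclideanSpace ℝ (Fin dx))) :=
    ⟨⟨Measure.dirac 0, inferInstance⟩⟩
  haveI h1 : IsProbabilityMeasure (η.map Prod.fst) :=
    Measure.isProbabilityMeasure_map measurable_fst.aemeasurable
  haveI h2 : IsProbabilityMeasure (η.map Prod.snd) :=
    Measure.isProbabilityMeasure_map measurable_snd.aemeasurable
  haveI h3 : IsProbabilityMeasure (θ.map Prod.fst) :=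
    Measure.isProbabilityMeasure_map measurable_fst.aemeasurable
  haveI h4 : IsProbabilityMeasure (θ.map Prod.snd) :=
    Measure.isProbabilityMeasure_map measurable_snd.aemeasurable
  set K : ℝ := (M + C) * dBL η θ with hK
  set A1 : ℝ := ⨆ ν' : ProbabilityMeasure (EuclideanSpace ℝ (Fin dy)),
      Lexp l (η.map Prod.fst) (ν' : Measure _) with hA1
  set A2 : ℝ := ⨆ ν' : ProbabilityMeasure (EuclideanSpace ℝ (Fin dy)),
      Lexp l (θ.map Prod.fst) (ν' : Measure _) with hA2
  set B1 : ℝ := ⨅ μ' : ProbabilityMeasure (EuclideanSpace ℝ (Fin dx)),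
      Lexp l (μ' : Measure _) (η.map Prod.snd) with hB1
  set B2 : ℝ := ⨅ μ' : ProbabilityMeasure (EuclideanSpace ℝ (Fin dx)),
      Lexp l (μ' : Measure _) (θ.map Prod.snd) with hB2
  have bddA1 : BddAbove (Set.range fun ν' : ProbabilityMeasure (EuclideanSpace ℝ (Fin dy)) =>
      Lexp l (η.map Prod.fst) (ν' : Measure _)) := by
    refine ⟨M, ?_⟩; rintro _ ⟨ν', rfl⟩
    exact (abs_le.mp (abs_Lexp_le l hb hM _ _)).2
  have bddA2 : BddAbove (Set.range fun ν' : ProbabilityMeasure (EuclideanSpace ℝ (Fin dy)) =>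
      Lexp l (θ.map Prod.fst) (ν' : Measure _)) := by
    refine ⟨M, ?_⟩; rintro _ ⟨ν', rfl⟩
    exact (abs_le.mp (abs_Lexp_le l hb hM _ _)).2
  have bddB1 : BddBelow (Set.range fun μ' : ProbabilityMeasure (EuclideanSpace ℝ (Fin dx)) =>
      Lexp l (μ' : Measure _) (η.map Prod.snd)) := by
    refine ⟨-M, ?_⟩; rintro _ ⟨μ', rfl⟩
    exact (abs_le.mp (abs_Lexp_le l hb hM _ _)).1
  have bddB2 : BddBelow (Set.range fun μ' : ProbabilityMeasure (EuclideanSpace ℝ (Fin dx)) =>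
      Lexp l (μ' : Measure _) (θ.map Prod.snd)) := by
    refine ⟨-M, ?_⟩; rintro _ ⟨μ', rfl⟩
    exact (abs_le.mp (abs_Lexp_le l hb hM _ _)).1
  have hA : |A1 - A2| ≤ K := by
    rw [abs_sub_le_iff]
    constructor
    · rw [sub_le_iff_le_add, hA1]
      refine ciSup_le fun ν' => ?_
      have h := (abs_sub_le_iff.mp (key_fst l hc hb hlx η θ (ν' : Measure _))).1
      have h' := le_ciSup bddA2 ν'
      rw [← hA2] at h'
      linarith
    · rw [sub_le_iff_le_add, hA2]
      refine ciSup_le fun ν' => ?_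
      have h := (abs_sub_le_iff.mp (key_fst l hc hb hlx η θ (ν' : Measure _))).2
      have h' := le_ciSup bddA1 ν'
      rw [← hA1] at h'
      linarith
  have hB : |B1 - B2| ≤ K := by
    rw [abs_sub_le_iff]
    constructor
    · rw [sub_le_comm, hB2]
      refine le_ciInf fun μ' => ?_
      have h := (abs_sub_le_iff.mp (key_snd l hc hb hly η θ (μ' : Measure _))).1
      have h' := ciInf_le bddB1 μ'
      rw [← hB1] at h'
      linarith
    · rw [sub_le_comm, hB1]
      refine le_ciInf fun μ' => ?_
      have h := (abs_sub_le_iff.mp (key_snd l hc hb hly η θ (μ' : Measure _))).2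
      have h' := ciInf_le bddB2 μ'
      rw [← hB2] at h'
      linarith
  have : NImarg l η - NImarg l θ = (A1 - A2) - (B1 - B2) := by
    simp only [NImarg, NIerr, hA1, hA2, hB1, hB2]; ring
  rw [this]
  calc |(A1 - A2) - (B1 - B2)| ≤ |A1 - A2| + |B1 - B2| := abs_sub _ _
    _ ≤ K + K := add_le_add hA hB
    _ = 2 * (M + C) * dBL η θ := by rw [hK]; ring
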